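/- Let B be an H₂-convex set in a topological H₂-module X. Then both the interior of B and the closure of B are H₂-convex sets. -/

import Mathlib

open Pointwise

/-- The ring of bihyperbolic numbers in its idempotent representation:
componentwise operations on `Fin 4 → ℝ`. -/
abbrev D : Type := Fin 4 → ℝ

/-- The idempotents `eᵢ`. -/
noncomputable def e (i : Fin 4) : D := Pi.single i 1

/-- The bihyperbolic-valued modulus: componentwise absolute value. -/
def dabs (a : D) : D := fun i => |a i|

/-- Strict componentwise inequality `a ≺ b`. -/
def sLt (a b : D) : Prop := ∀ i, a i < b i

/-- The ring homomorphism `ℝ → D` sending `r` to the constant function `r`. -/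
def rconst (a : ℝ) : D := fun _ => a

/-- A set `B` in an `H₂`-module is `H₂`-balanced if `c • x ∈ B` whenever
`x ∈ B` and `|c| ⪯ 1`. -/
def H2Balanced {X : Type*} [AddCommGroup X] [Module D X] (B : Set X) : Prop :=
  ∀ x ∈ B, ∀ c : D, dabs c ≤ 1 → c • x ∈ B

/-- A set `B` in an `H₂`-module is `H₂`-convex if `c • x + (1 - c) • y ∈ B`
for all `x, y ∈ B` and `0 ⪯ c ⪯ 1`. -/
def H2Convex {X : Type*} [AddCommGroup X] [Module D X] (B : Set X) : Prop :=
  ∀ x ∈ B, ∀ y ∈ B, ∀ c : D, 0 ≤ c → c ≤ 1 → c • x + (1 - c) • y ∈ B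

/-- A set `B` in an `H₂`-module is `H₂`-absorbing if every `x` admits `ε ≻ 0`
with `c • x ∈ B` whenever `0 ⪯ c ⪯ ε`. -/
def H2Absorbing {X : Type*} [AddCommGroup X] [Module D X] (B : Set X) : Prop :=
  ∀ x : X, ∃ ε : D, sLt 0 ε ∧ ∀ c : D, 0 ≤ c → c ≤ ε → c • x ∈ B

/-- An `H₂`-valued seminorm. -/
def IsH2Seminorm {X : Type*} [AddCommGroup X] [Module D X] (p : X → D) : Prop :=
  (∀ c : D, ∀ x : X, p (c • x) = dabs c * p x) ∧ ∀ x y : X, p (x + y) ≤ p x + p y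

/-- An `H₂`-valued norm. -/
def IsH2Norm {X : Type*} [AddCommGroup X] [Module D X] (N : X → D) : Prop :=
  (∀ x : X, N x = 0 ↔ x = 0) ∧ (∀ c : D, ∀ x : X, N (c • x) = dabs c * N x) ∧
    ∀ x y : X, N (x + y) ≤ N x + N y

/-- A subset of a topological `H₂`-module is bounded if every neighbourhood of `0`
absorbs it. -/
def H2Bounded {X : Type*} [AddCommGroup X] [Module D X] [TopologicalSpace X]
    (B : Set X) : Prop :=
  ∀ U ∈ nhds (0 : X), ∃ c : D, sLt 0 c ∧ B ⊆ c • U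

/-- The `H₂`-valued Minkowski functional of a set `B`, defined componentwise. -/
noncomputable def minkowski {X : Type*} [AddCommGroup X] [Module D X]
    (B : Set X) (x : X) : D :=
  fun i => sInf {t : ℝ | ∃ α : D, sLt 0 α ∧ x ∈ α • B ∧ α i = t}
/-- For an `H₂`-convex set `B` in a topological `H₂`-module, both the interior and
the closure of `B` are `H₂`-convex. -/
theorem interior_closure_convex {X : Type*} [AddCommGroup X] [Module D X]
    [TopologicalSpace X] [T2Space X] [ContinuousAdd X] [ContinuousSMul D X]
    (B : Set X) (hB : H2Convex B) :
    H2Convex (interior B) ∧ H2Convex (closure B) := by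
  haveI : IsTopologicalAddGroup X :=
    { continuous_neg := by
        have : Continuous fun x : X => (-1 : D) • x := continuous_const.smul continuous_id
        simpa using this }
  constructor
  · intro x hx y hy c hc0 hc1
    rw [mem_interior_iff_mem_nhds]
    have key : ∀ z : X, c • (x + z) + (1 - c) • (y + z) = c • x + (1 - c) • y + z := by
      intro z; module
    rw [← map_add_left_nhds_zero (c • x + (1 - c) • y), Filter.mem_map]
    have h0x : (fun z : X => x + z) ⁻¹' interior B ∈ nhds (0 : X) := by
      have hc : Continuous fun z : X => x + z := continuous_const.add continuous_id
      have := hc.tendsto 0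
      rw [add_zero] at this
      exact this (isOpen_interior.mem_nhds hx)
    have h0y : (fun z : X => y + z) ⁻¹' interior B ∈ nhds (0 : X) := by
      have hc : Continuous fun z : X => y + z := continuous_const.add continuous_id
      have := hc.tendsto 0
      rw [add_zero] at this
      exact this (isOpen_interior.mem_nhds hy)
    filter_upwards [h0x, h0y] with z hzx hzy
    show c • x + (1 - c) • y + z ∈ B
    rw [← key z]
    exact hB _ (interior_subset hzx) _ (interior_subset hzy) c hc0 hc1
  · intro x hx y hy c hc0 hc1
    have hf : Continuous fun p : X × X => c • p.1 + (1 - c) • p.2 :=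
      (continuous_const.smul continuous_fst).add (continuous_const.smul continuous_snd)
    exact map_mem_closure₂ (f := fun a b => c • a + (1 - c) • b) hf hx hy
      fun a ha b hb => hB a ha b hb c hc0 hc1
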